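/- arXiv:0712.2129 — 3 statements merged into one kernel-verified Lean document; each statement's English description precedes it below -/
import Mathlib

section
/- Let T(z,u) be the formal power series in z and u satisfying T(z,u) = 1 + u z T(z) T(z,u)^2, where T(z) = T(z,1) satisfies T = 1 + z T^3. Then the coefficient of z^n u^k in T(z,u) equals the number of ternary trees with n internal nodes whose underlying binary subtree (obtained by recursively keeping only the second and third children of nodes reachable from the root through second/third children) has k nodes. -/
open Finset

section Generic
variable {α β μ : Type*} [Add μ] (f : α → μ) (g : β → μ) (n : μ)
  (s : Finset (μ × μ))

/-- Decomposition equivalence for pairs with additive weight. -/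
def pairEquiv (hs : ∀ p : μ × μ, p ∈ s ↔ p.1 + p.2 = n) : {x : α × β // f x.1 + g x.2 = n} ≃
    Σ p : s, {a : α // f a = (p : μ × μ).1} × {b : β // g b = (p : μ × μ).2} where
  toFun x := ⟨⟨(f x.1.1, g x.1.2), (hs _).2 x.2⟩, ⟨x.1.1, rfl⟩, ⟨x.1.2, rfl⟩⟩
  invFun y := ⟨(y.2.1.1, y.2.2.1), by
    rw [y.2.1.2, y.2.2.2]; exact (hs _).1 y.1.2⟩
  left_inv := fun ⟨⟨a, b⟩, h⟩ => rfl
  right_inv := by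
    rintro ⟨⟨p, hp⟩, ⟨a, ha⟩, ⟨b, hb⟩⟩
    have hpp : (f a, g b) = p := Prod.ext ha hb
    subst hpp
    rfl

lemma finite_pair (hs : ∀ p : μ × μ, p ∈ s ↔ p.1 + p.2 = n)
    (hf : ∀ p ∈ s, Finite {a : α // f a = p.1})
    (hg : ∀ p ∈ s, Finite {b : β // g b = p.2}) :
    Finite {x : α × β // f x.1 + g x.2 = n} := by
  haveI : ∀ p : s, Finite ({a : α // f a = (p : μ × μ).1} × {b : β // g b = (p : μ × μ).2}) :=
    fun p => by haveI := hf _ p.2; haveI := hg _ p.2; infer_instance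
  exact Finite.of_equiv _ (pairEquiv f g n s hs).symm

lemma natCard_sigma {ι : Type*} [Fintype ι] {F : ι → Type*} [∀ i, Finite (F i)] :
    Nat.card (Σ i, F i) = ∑ i, Nat.card (F i) := by
  haveI : ∀ i, Fintype (F i) := fun i => Fintype.ofFinite _
  simp [Nat.card_eq_fintype_card]

lemma card_pair (hs : ∀ p : μ × μ, p ∈ s ↔ p.1 + p.2 = n)
    (hf : ∀ p ∈ s, Finite {a : α // f a = p.1})
    (hg : ∀ p ∈ s, Finite {b : β // g b = p.2}) :
    Nat.card {x : α × β // f x.1 + g x.2 = n} =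
      ∑ p ∈ s, Nat.card {a : α // f a = p.1} * Nat.card {b : β // g b = p.2} := by
  haveI : ∀ p : s, Finite {a : α // f a = (p : μ × μ).1} := fun p => hf _ p.2
  haveI : ∀ p : s, Finite {b : β // g b = (p : μ × μ).2} := fun p => hg _ p.2
  rw [Nat.card_congr (pairEquiv f g n s hs), natCard_sigma]
  simp_rw [Nat.card_prod]
  exact Finset.sum_coe_sort s fun p => Nat.card {a : α // f a = p.1} * Nat.card {b : β // g b = p.2}

end Generic

/-- Rooted plane ternary trees. -/
inductive Tern : Type
  | leaf : Tern
  | node : Tern → Tern → Tern → Tern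

/-- Number of internal nodes. -/
def Tern.size : Tern → ℕ
  | .leaf => 0
  | .node a b c => 1 + a.size + b.size + c.size

/-- Size of the underlying binary subtree: internal nodes reachable from the
root using only second and third child edges. -/
def Tern.binSize : Tern → ℕ
  | .leaf => 0
  | .node _ b c => 1 + b.binSize + c.binSize

def Tern.w (t : Tern) : ℕ × ℕ := (t.size, t.binSize)

def szw (a : Tern) : ℕ × ℕ := (a.size, 0)

def pairw (y : Tern × Tern) : ℕ × ℕ := Tern.w y.1 + Tern.w y.2

def pairsz (y : Tern × Tern) : ℕ := y.1.size + y.2.size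

def ternNodeEquiv (n : ℕ) :
    {t : Tern // t.size = n + 1} ≃ {x : Tern × (Tern × Tern) // Tern.size x.1 + pairsz x.2 = n} where
  toFun := fun x =>
    match x with
    | ⟨.leaf, h⟩ => absurd h (by simp [Tern.size])
    | ⟨.node a b c, h⟩ => ⟨(a, (b, c)), by
        simp only [Tern.size] at h; simp only [pairsz]; omega⟩
  invFun := fun x => ⟨.node x.1.1 x.1.2.1 x.1.2.2, by
    have := x.2; simp only [pairsz] at this; simp only [Tern.size]; omega⟩
  left_inv := fun x => by
    match x with
    | ⟨.leaf, h⟩ => exact absurd h (by simp [Tern.size])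
    | ⟨.node a b c, h⟩ => rfl
  right_inv := fun ⟨⟨a, b, c⟩, h⟩ => rfl

def bivNodeEquiv (n k : ℕ) :
    {t : Tern // t.size = n + 1 ∧ t.binSize = k + 1} ≃
      {x : Tern × (Tern × Tern) // szw x.1 + pairw x.2 = (n, k)} where
  toFun := fun x =>
    match x with
    | ⟨.leaf, h⟩ => absurd h.1 (by simp [Tern.size])
    | ⟨.node a b c, h⟩ => ⟨(a, (b, c)), by
        obtain ⟨h1, h2⟩ := h
        simp only [Tern.size] at h1; simp only [Tern.binSize] at h2
        simp only [szw, pairw, Tern.w, Prod.mk_add_mk, Prod.mk.injEq]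
        omega⟩
  invFun := fun x => ⟨.node x.1.1 x.1.2.1 x.1.2.2, by
    have := x.2
    simp only [szw, pairw, Tern.w, Prod.mk_add_mk, Prod.mk.injEq] at this
    simp only [Tern.size, Tern.binSize]; omega⟩
  left_inv := fun x => by
    match x with
    | ⟨.leaf, h⟩ => exact absurd h.1 (by simp [Tern.size])
    | ⟨.node a b c, h⟩ => rfl
  right_inv := fun ⟨⟨a, b, c⟩, h⟩ => rfl

lemma finite_size (n : ℕ) : Finite {t : Tern // t.size = n} := by
  induction n using Nat.strong_induction_on with
  | _ n ih =>
    cases n with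
    | zero =>
      haveI : Subsingleton {t : Tern // t.size = 0} := ⟨by
        rintro ⟨t, ht⟩ ⟨u, hu⟩
        cases t <;> cases u <;> simp [Tern.size] at ht hu ⊢⟩
      exact Finite.of_subsingleton
    | succ n =>
      haveI : Finite {x : Tern × (Tern × Tern) // Tern.size x.1 + pairsz x.2 = n} := by
        refine finite_pair Tern.size pairsz n (antidiagonal n) (fun p => mem_antidiagonal)
          (fun p hp => ih p.1 ?_) (fun p hp => ?_)
        · have := Finset.HasAntidiagonal.antidiagonal.fst_le hp; omega
        · have hple := Finset.HasAntidiagonal.antidiagonal.snd_le hp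
          exact finite_pair Tern.size Tern.size p.2 (antidiagonal p.2) (fun q => mem_antidiagonal)
            (fun q hq => ih q.1 (by have := Finset.HasAntidiagonal.antidiagonal.fst_le hq; omega))
            (fun q hq => ih q.2 (by have := Finset.HasAntidiagonal.antidiagonal.snd_le hq; omega))
      exact Finite.of_equiv _ (ternNodeEquiv n).symm

lemma finite_w (P : ℕ × ℕ) : Finite {t : Tern // Tern.w t = P} := by
  haveI := finite_size P.1
  exact Finite.of_injective
    (fun x : {t : Tern // Tern.w t = P} =>
      (⟨x.1, congrArg Prod.fst x.2⟩ : {t : Tern // t.size = P.1}))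
    (fun x y h => by apply Subtype.ext; exact congrArg (fun z : {t : Tern // t.size = P.1} => z.val) h)

lemma finite_szw (P : ℕ × ℕ) : Finite {a : Tern // szw a = P} := by
  haveI := finite_size P.1
  exact Finite.of_injective
    (fun x : {a : Tern // szw a = P} =>
      (⟨x.1, congrArg Prod.fst x.2⟩ : {t : Tern // t.size = P.1}))
    (fun x y h => by apply Subtype.ext; exact congrArg (fun z : {t : Tern // t.size = P.1} => z.val) h)

def emb2 : (ℕ × ℕ) × (ℕ × ℕ) ↪ (ℕ × ℕ) × (ℕ × ℕ) :=
  ⟨fun x => ((x.1.1, x.2.1), (x.1.2, x.2.2)), by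
    rintro ⟨⟨a, b⟩, ⟨c, d⟩⟩ ⟨⟨a', b'⟩, ⟨c', d'⟩⟩ h
    simp only [Prod.mk.injEq] at h ⊢
    tauto⟩

def s2 (n k : ℕ) : Finset ((ℕ × ℕ) × (ℕ × ℕ)) := ((antidiagonal n) ×ˢ (antidiagonal k)).map emb2

lemma mem_s2 {n k : ℕ} : ∀ P, P ∈ s2 n k ↔ P.1 + P.2 = (n, k) := by
  rintro ⟨⟨a, b⟩, ⟨c, d⟩⟩
  constructor
  · intro h
    obtain ⟨⟨⟨i, j⟩, ⟨p, q⟩⟩, hmem, heq⟩ := Finset.mem_map.mp h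
    simp only [Finset.mem_product, Finset.HasAntidiagonal.mem_antidiagonal] at hmem
    obtain ⟨h1, h2⟩ := hmem
    simp only [emb2, Function.Embedding.coeFn_mk, Prod.mk.injEq] at heq
    simp only [Prod.mk_add_mk, Prod.mk.injEq]
    obtain ⟨⟨e1, e2⟩, e3, e4⟩ := heq
    dsimp only at *
    omega
  · intro h
    simp only [Prod.mk_add_mk, Prod.mk.injEq] at h
    exact Finset.mem_map.mpr ⟨((a, c), (b, d)),
      Finset.mem_product.mpr ⟨mem_antidiagonal.mpr h.1, mem_antidiagonal.mpr h.2⟩, rfl⟩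

lemma sum_s2 {M : Type*} [AddCommMonoid M] (n k : ℕ) (f : (ℕ × ℕ) × (ℕ × ℕ) → M) :
    ∑ P ∈ s2 n k, f P =
      ∑ p ∈ antidiagonal n, ∑ r ∈ antidiagonal k, f ((p.1, r.1), (p.2, r.2)) := by
  rw [s2, Finset.sum_map, Finset.sum_product]
  rfl

lemma finite_pairw (P : ℕ × ℕ) : Finite {y : Tern × Tern // Tern.w y.1 + Tern.w y.2 = P} :=
  finite_pair Tern.w Tern.w P (s2 P.1 P.2) mem_s2 (fun q _ => finite_w q.1)
    (fun q _ => finite_w q.2)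

noncomputable def cnt (n : ℕ) : ℕ := Nat.card {t : Tern // t.size = n}

noncomputable def bcnt (n k : ℕ) : ℕ := Nat.card {t : Tern // t.size = n ∧ t.binSize = k}

lemma size_eq_zero : ∀ t : Tern, t.size = 0 → t = .leaf := by
  intro t h
  cases t with
  | leaf => rfl
  | node a b c => simp [Tern.size] at h

lemma cnt_zero : cnt 0 = 1 := by
  haveI : Unique {t : Tern // t.size = 0} :=
    ⟨⟨⟨.leaf, rfl⟩⟩, fun x => Subtype.ext (size_eq_zero x.1 x.2)⟩
  exact Nat.card_unique

lemma bcnt_zero : bcnt 0 0 = 1 := by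
  haveI : Unique {t : Tern // t.size = 0 ∧ t.binSize = 0} :=
    ⟨⟨⟨.leaf, rfl, rfl⟩⟩, fun x => Subtype.ext (size_eq_zero x.1 x.2.1)⟩
  exact Nat.card_unique

lemma bcnt_zero_succ (k : ℕ) : bcnt 0 (k + 1) = 0 := by
  haveI : IsEmpty {t : Tern // t.size = 0 ∧ t.binSize = k + 1} := ⟨by
    rintro ⟨t, h1, h2⟩
    cases t <;> simp [Tern.size, Tern.binSize] at h1 h2⟩
  exact Nat.card_of_isEmpty

lemma bcnt_succ_zero (n : ℕ) : bcnt (n + 1) 0 = 0 := by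
  haveI : IsEmpty {t : Tern // t.size = n + 1 ∧ t.binSize = 0} := ⟨by
    rintro ⟨t, h1, h2⟩
    cases t <;> simp [Tern.size, Tern.binSize] at h1 h2⟩
  exact Nat.card_of_isEmpty

lemma wcnt_eq (i j : ℕ) : Nat.card {t : Tern // Tern.w t = (i, j)} = bcnt i j :=
  Nat.card_congr (Equiv.subtypeEquivRight fun t => by simp [Tern.w, Prod.ext_iff])

lemma card_szw_zero (i : ℕ) : Nat.card {a : Tern // szw a = (i, 0)} = cnt i :=
  Nat.card_congr (Equiv.subtypeEquivRight fun a => by simp [szw, Prod.ext_iff])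

lemma card_szw_succ (i j : ℕ) : Nat.card {a : Tern // szw a = (i, j + 1)} = 0 := by
  haveI : IsEmpty {a : Tern // szw a = (i, j + 1)} := ⟨by
    rintro ⟨a, h⟩
    simp [szw, Prod.ext_iff] at h⟩
  exact Nat.card_of_isEmpty

lemma card_pairw (i j : ℕ) :
    Nat.card {y : Tern × Tern // pairw y = (i, j)} =
      ∑ q ∈ antidiagonal i, ∑ u ∈ antidiagonal j, bcnt q.1 u.1 * bcnt q.2 u.2 := by
  have key : Nat.card {y : Tern × Tern // Tern.w y.1 + Tern.w y.2 = ((i : ℕ), (j : ℕ))} =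
      ∑ Q ∈ s2 i j, Nat.card {a : Tern // Tern.w a = Q.1} *
        Nat.card {b : Tern // Tern.w b = Q.2} :=
    card_pair Tern.w Tern.w (i, j) (s2 i j) mem_s2
      (fun q _ => finite_w q.1) (fun q _ => finite_w q.2)
  calc Nat.card {y : Tern × Tern // pairw y = (i, j)}
      = ∑ Q ∈ s2 i j, Nat.card {a : Tern // Tern.w a = Q.1} *
          Nat.card {b : Tern // Tern.w b = Q.2} := key
    _ = ∑ q ∈ antidiagonal i, ∑ u ∈ antidiagonal j, bcnt q.1 u.1 * bcnt q.2 u.2 := by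
        rw [sum_s2]
        exact Finset.sum_congr rfl fun q _ => Finset.sum_congr rfl fun u _ => by
          rw [wcnt_eq, wcnt_eq]

lemma card_pairsz (m : ℕ) :
    Nat.card {y : Tern × Tern // pairsz y = m} = ∑ q ∈ antidiagonal m, cnt q.1 * cnt q.2 :=
  card_pair Tern.size Tern.size m (antidiagonal m) (fun q => mem_antidiagonal)
    (fun q _ => finite_size q.1) (fun q _ => finite_size q.2)

lemma cnt_succ (n : ℕ) :
    cnt (n + 1) = ∑ p ∈ antidiagonal n, cnt p.1 * ∑ q ∈ antidiagonal p.2, cnt q.1 * cnt q.2 := by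
  have h1 : cnt (n + 1) = Nat.card {x : Tern × (Tern × Tern) // Tern.size x.1 + pairsz x.2 = n} :=
    Nat.card_congr (ternNodeEquiv n)
  rw [h1, card_pair Tern.size pairsz n (antidiagonal n) (fun p => mem_antidiagonal)
    (fun p _ => finite_size p.1)
    (fun p _ => finite_pair Tern.size Tern.size p.2 (antidiagonal p.2) (fun q => mem_antidiagonal)
      (fun q _ => finite_size q.1) (fun q _ => finite_size q.2))]
  exact Finset.sum_congr rfl fun p _ => by rw [card_pairsz]; rfl

lemma bcnt_succ (n k : ℕ) :
    bcnt (n + 1) (k + 1) =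
      ∑ p ∈ antidiagonal n, cnt p.1 *
        ∑ q ∈ antidiagonal p.2, ∑ r ∈ antidiagonal k, bcnt q.1 r.1 * bcnt q.2 r.2 := by
  have h1 : bcnt (n + 1) (k + 1) =
      Nat.card {x : Tern × (Tern × Tern) // szw x.1 + pairw x.2 = ((n : ℕ), (k : ℕ))} :=
    Nat.card_congr (bivNodeEquiv n k)
  rw [h1, card_pair szw pairw (n, k) (s2 n k) mem_s2
    (fun P _ => finite_szw P.1) (fun P _ => finite_pairw P.2), sum_s2]
  refine Finset.sum_congr rfl fun p _ => ?_
  rw [Finset.sum_eq_single ((0 : ℕ), k)]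
  · dsimp only
    rw [card_szw_zero, card_pairw]
  · rintro ⟨r1, r2⟩ hr hne
    simp only [Finset.HasAntidiagonal.mem_antidiagonal] at hr
    cases r1 with
    | zero =>
      have : r2 = k := by omega
      subst this
      exact absurd rfl hne
    | succ m =>
      dsimp only
      rw [card_szw_succ, zero_mul]
  · intro hnot
    exact absurd (Finset.HasAntidiagonal.mem_antidiagonal.mpr (by simp)) hnot

open PowerSeries

/-- Let `T(z,u)` (modeled as a power series in `z` with coefficients that are
polynomials in `u`) satisfy `T(z,u) = 1 + u z T(z) T(z,u)^2`, where
`T(z) = T(z,1)` satisfies `T = 1 + z T^3`.  Then the coefficient of `z^n u^k`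
in `T(z,u)` equals the number of ternary trees with `n` internal nodes whose
underlying binary subtree has `k` nodes. -/
theorem bivariate_binary_subtree_gf (T : PowerSeries ℚ)
    (hT : T = 1 + PowerSeries.X * T ^ 3)
    (F : PowerSeries (Polynomial ℚ))
    (hF : F = 1 + PowerSeries.C Polynomial.X * PowerSeries.X *
      PowerSeries.map (Polynomial.C) T * F ^ 2) :
    ∀ n k : ℕ,
      Polynomial.coeff (PowerSeries.coeff n F) k =
        Nat.card {t : Tern // t.size = n ∧ t.binSize = k} := by
  have hTc : ∀ n : ℕ, (PowerSeries.coeff n) T = (cnt n : ℚ) := by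
    intro n
    induction n using Nat.strong_induction_on with
    | _ n ih =>
      cases n with
      | zero =>
        rw [hT, map_add, PowerSeries.coeff_zero_X_mul, cnt_zero]
        simp
      | succ n =>
        have e3 : T ^ 3 = T * (T * T) := by ring
        rw [hT, map_add, PowerSeries.coeff_one, if_neg (Nat.succ_ne_zero n),
          PowerSeries.coeff_succ_X_mul, e3, PowerSeries.coeff_mul, zero_add]
        simp_rw [PowerSeries.coeff_mul]
        rw [cnt_succ]
        push_cast
        refine Finset.sum_congr rfl fun p hp => ?_
        have hp1 := Finset.HasAntidiagonal.antidiagonal.fst_le hp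
        have hp2 := Finset.HasAntidiagonal.antidiagonal.snd_le hp
        rw [ih p.1 (by omega)]
        congr 1
        refine Finset.sum_congr rfl fun q hq => ?_
        have hq1 := Finset.HasAntidiagonal.antidiagonal.fst_le hq
        have hq2 := Finset.HasAntidiagonal.antidiagonal.snd_le hq
        rw [ih q.1 (by omega), ih q.2 (by omega)]
  have hFc : ∀ n k : ℕ,
      Polynomial.coeff ((PowerSeries.coeff n) F) k = (bcnt n k : ℚ) := by
    intro n
    induction n using Nat.strong_induction_on with
    | _ n ih =>
      cases n with
      | zero =>
        have h0 : (PowerSeries.coeff 0) F = 1 := by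
          rw [hF, map_add]
          have e : PowerSeries.C Polynomial.X * PowerSeries.X *
              PowerSeries.map (Polynomial.C) T * F ^ 2 =
              PowerSeries.X * (PowerSeries.C Polynomial.X *
                PowerSeries.map (Polynomial.C) T * F ^ 2) := by ring
          rw [e, PowerSeries.coeff_zero_X_mul, add_zero]
          simp
        intro k
        rw [h0]
        cases k with
        | zero => simp [bcnt_zero]
        | succ k => simp [Polynomial.coeff_one, bcnt_zero_succ]
      | succ n =>
        intro k
        have e : PowerSeries.C Polynomial.X * PowerSeries.X *
            PowerSeries.map (Polynomial.C) T * F ^ 2 =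
            PowerSeries.X * (PowerSeries.C Polynomial.X *
              (PowerSeries.map (Polynomial.C) T * (F * F))) := by ring
        have hstep : (PowerSeries.coeff (n + 1)) F =
            Polynomial.X * ∑ p ∈ Finset.HasAntidiagonal.antidiagonal n,
              Polynomial.C ((PowerSeries.coeff p.1) T) *
                ∑ q ∈ Finset.HasAntidiagonal.antidiagonal p.2,
                  ((PowerSeries.coeff q.1) F) *
                    ((PowerSeries.coeff q.2) F) := by
          conv_lhs => rw [hF]
          rw [map_add, e, PowerSeries.coeff_one, if_neg (Nat.succ_ne_zero n),
            PowerSeries.coeff_succ_X_mul, PowerSeries.coeff_C_mul, PowerSeries.coeff_mul,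
            zero_add]
          simp_rw [PowerSeries.coeff_map, PowerSeries.coeff_mul]
        cases k with
        | zero =>
          rw [hstep, Polynomial.coeff_X_mul_zero, bcnt_succ_zero]
          norm_num
        | succ k =>
          rw [hstep, Polynomial.coeff_X_mul, Polynomial.finset_sum_coeff]
          simp_rw [Polynomial.coeff_C_mul, Polynomial.finset_sum_coeff, Polynomial.coeff_mul]
          rw [bcnt_succ]
          push_cast
          refine Finset.sum_congr rfl fun p hp => ?_
          rw [hTc p.1]
          congr 1
          refine Finset.sum_congr rfl fun q hq => ?_
          refine Finset.sum_congr rfl fun r hr => ?_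
          have hp1 := Finset.HasAntidiagonal.antidiagonal.fst_le hp
          have hp2 := Finset.HasAntidiagonal.antidiagonal.snd_le hp
          have hq1 := Finset.HasAntidiagonal.antidiagonal.fst_le hq
          have hq2 := Finset.HasAntidiagonal.antidiagonal.snd_le hq
          rw [ih q.1 (by omega) r.1, ih q.2 (by omega) r.2]
  intro n k
  rw [hFc n k]
  rfl
end

section
/- Let T satisfy T = 1 + zT^3 as a formal power series. Define D_1(z) = z T^3 / (1 - 2 z T^2) as a formal power series (the denominator has nonzero constant term). Then D_1(z) = \partial_u T_1(z,u)|_{u=1}, where T_1(z,u) is the formal power series satisfying T_1(z,u) = 1 + z u T_1(z,u)^2 T(z). -/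
open PowerSeries

noncomputable def Ev : Polynomial ℚ →+* ℚ := Polynomial.evalRingHom 1

noncomputable def mE : PowerSeries (Polynomial ℚ) → PowerSeries ℚ := PowerSeries.map Ev

noncomputable def Δ (f : PowerSeries (Polynomial ℚ)) : PowerSeries ℚ :=
  PowerSeries.mk fun n =>
    Polynomial.eval 1 (Polynomial.derivative (PowerSeries.coeff n f))

lemma coeff_Δ (f : PowerSeries (Polynomial ℚ)) (n : ℕ) :
    PowerSeries.coeff n (Δ f) =
      Polynomial.eval 1 (Polynomial.derivative (PowerSeries.coeff n f)) := by
  simp [Δ]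

lemma coeff_mE (f : PowerSeries (Polynomial ℚ)) (n : ℕ) :
    PowerSeries.coeff n (mE f) =
      Polynomial.eval 1 (PowerSeries.coeff n f) := by
  simp [mE, Ev]

lemma Δ_one : Δ (1 : PowerSeries (Polynomial ℚ)) = 0 := by
  ext n
  simp [coeff_Δ, PowerSeries.coeff_one]
  split <;> simp

lemma Δ_mul (f g : PowerSeries (Polynomial ℚ)) :
    Δ (f * g) = Δ f * mE g + mE f * Δ g := by
  ext n
  simp only [coeff_Δ, PowerSeries.coeff_mul, map_add, map_sum,
    Polynomial.derivative_mul, Polynomial.eval_add, Polynomial.eval_mul,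
    coeff_mE, Finset.sum_add_distrib]
  rw [Polynomial.eval_finset_sum, Polynomial.eval_finset_sum]
  simp [Finset.sum_add_distrib]

lemma mE_mul (f g : PowerSeries (Polynomial ℚ)) :
    mE (f * g) = mE f * mE g := by simp [mE]

lemma mE_one : mE (1 : PowerSeries (Polynomial ℚ)) = 1 := by simp [mE]

lemma mE_X : mE (PowerSeries.X) = PowerSeries.X := by
  ext n; simp [coeff_mE, PowerSeries.coeff_X]; split <;> simp

lemma mE_CX : mE (PowerSeries.C Polynomial.X) = 1 := by
  ext n; simp [coeff_mE, PowerSeries.coeff_C, PowerSeries.coeff_one]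
  split <;> simp

lemma mE_mapC (T : PowerSeries ℚ) : mE (PowerSeries.map Polynomial.C T) = T := by
  ext n; simp [coeff_mE]

lemma Δ_X : Δ (PowerSeries.X : PowerSeries (Polynomial ℚ)) = 0 := by
  ext n; simp [coeff_Δ, PowerSeries.coeff_X]; split <;> simp

lemma Δ_CX : Δ (PowerSeries.C Polynomial.X) = 1 := by
  ext n; simp [coeff_Δ, PowerSeries.coeff_C, PowerSeries.coeff_one]
  split <;> simp

lemma Δ_mapC (T : PowerSeries ℚ) : Δ (PowerSeries.map Polynomial.C T) = 0 := by
  ext n; simp [coeff_Δ]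

lemma unique_fix (T f g : PowerSeries ℚ)
    (hf : f = 1 + PowerSeries.X * f ^ 2 * T)
    (hg : g = 1 + PowerSeries.X * g ^ 2 * T) : f = g := by
  have key : (f - g) * (1 - PowerSeries.X * (f + g) * T) = 0 := by
    have : f - g = PowerSeries.X * (f ^ 2 - g ^ 2) * T := by
      nth_rewrite 1 [hf]; nth_rewrite 1 [hg]; ring
    calc (f - g) * (1 - PowerSeries.X * (f + g) * T)
        = (f - g) - (f - g) * (PowerSeries.X * (f + g) * T) := by ring
      _ = PowerSeries.X * (f ^ 2 - g ^ 2) * T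
            - (f - g) * (PowerSeries.X * (f + g) * T) := by rw [← this]
      _ = 0 := by ring
  have hne : (1 - PowerSeries.X * (f + g) * T) ≠ 0 := by
    intro h
    have := congrArg (PowerSeries.constantCoeff) h
    simp at this
  have := mul_eq_zero.mp key
  rcases this with h | h
  · linear_combination h
  · exact absurd h hne

/-- Let `T = 1 + zT^3` and let `T₁(z,u)` (a power series in `z` with polynomial
coefficients in `u`) satisfy `T₁(z,u) = 1 + z u T₁(z,u)^2 T(z)`.  Then
`D₁(z) = z T^3 / (1 - 2 z T^2)` equals `∂_u T₁(z,u)|_{u=1}`. -/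
theorem distance_one_gf (T : PowerSeries ℚ)
    (hT : T = 1 + PowerSeries.X * T ^ 3)
    (T1 : PowerSeries (Polynomial ℚ))
    (hT1 : T1 = 1 + PowerSeries.X * PowerSeries.C Polynomial.X *
      T1 ^ 2 * PowerSeries.map (Polynomial.C) T) :
    PowerSeries.X * T ^ 3 * (1 - 2 * PowerSeries.X * T ^ 2)⁻¹ =
      PowerSeries.mk (fun n =>
        Polynomial.eval 1 (Polynomial.derivative
          (PowerSeries.coeff n T1))) := by
  set D : PowerSeries ℚ := Δ T1 with hD
  have goalD : PowerSeries.mk (fun n =>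
      Polynomial.eval 1 (Polynomial.derivative
        (PowerSeries.coeff n T1))) = D := rfl
  rw [goalD]
  -- mE T1 = T
  have hS : mE T1 = T := by
    apply unique_fix T
    · conv_lhs => rw [hT1]
      simp only [mE, map_add, map_mul, map_one, map_pow]
      rw [show (PowerSeries.map Ev) PowerSeries.X = PowerSeries.X from mE_X,
        show (PowerSeries.map Ev) (PowerSeries.C Polynomial.X) = 1 from mE_CX,
        show (PowerSeries.map Ev) (PowerSeries.map Polynomial.C T) = T from mE_mapC T]
      ring
    · nth_rewrite 1 [hT]; ring
  -- the derivative equation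
  have hDeq : D = PowerSeries.X * T ^ 3 + 2 * PowerSeries.X * T ^ 2 * D := by
    have hsq : Δ (T1 ^ 2) = 2 * T * D := by
      have : T1 ^ 2 = T1 * T1 := sq T1
      rw [this, Δ_mul, hS, hD]; ring
    have hmsq : mE (T1 ^ 2) = T ^ 2 := by
      rw [show T1 ^ 2 = T1 * T1 from sq T1, mE_mul, hS]; ring
    have hadd : ∀ a b : PowerSeries (Polynomial ℚ), Δ (a + b) = Δ a + Δ b := by
      intro a b; ext n; simp [coeff_Δ]
    conv_lhs => rw [hD, hT1]
    rw [hadd, Δ_one, Δ_mul, Δ_mul, Δ_mul, Δ_X, Δ_CX, Δ_mapC, mE_mul, mE_mul,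
      mE_X, mE_CX, mE_mapC, hsq, hmsq]
    ring
  -- conclude
  have hunit : PowerSeries.constantCoeff (1 - 2 * PowerSeries.X * T ^ 2) ≠ 0 := by
    simp
  rw [eq_comm, PowerSeries.eq_mul_inv_iff_mul_eq hunit]
  linear_combination hDeq
end

section
/- Define the topological generating function Δ(z, d₁, d₂, d₃) = \sum_R d₁^{Δ₁(R)} d₂^{Δ₂(R)} d₃^{Δ₃(R)} z^{|R|} over all RANS R, where Δᵢ(R) is the sum over internal vertices x of R of the distance from x to the first i outermost vertices. Then Δ satisfies the functional equation Δ(z,d₁,d₂,d₃) = 1 + z d₁ d₂ d₃ · Δ(z d₁, d₂, d₃, d₁) · Δ(z, d₁, d₂ d₃, 1) · Δ(z, d₁ d₂, d₃, 1). -/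
/-- Sum, over the internal vertices of a RANS whose three outermost vertices
carry labels `a b c`, of the vertex labels, where the center gets label
`1 + min` of the outermost labels and labels propagate to the sub-RANS (the
label of an internal vertex is its graph distance to the nearest outermost
vertex with label 0). -/
def Tern.labelSum : Tern → ℕ → ℕ → ℕ → ℕ
  | .leaf, _, _, _ => 0
  | .node s₁ s₂ s₃, a, b, c =>
      let m := 1 + min a (min b c)
      m + s₁.labelSum m b c + s₂.labelSum a m c + s₃.labelSum a b m

/-- `Δ₁(R)`: cumulated distance of internal vertices to the outermost vertex `O₁`. -/
def Tern.d1 (t : Tern) : ℕ := t.labelSum 0 1 1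

/-- `Δ₂(R)`: cumulated distance of internal vertices to `{O₁, O₂}`. -/
def Tern.d2 (t : Tern) : ℕ := t.labelSum 0 0 1

/-- `Δ₃(R)`: cumulated distance of internal vertices to `{O₁, O₂, O₃}`. -/
def Tern.d3 (t : Tern) : ℕ := t.labelSum 0 0 0

open PowerSeries MvPolynomial

/-- Coefficient ring: polynomials in the three distance markers `d₁, d₂, d₃`. -/
abbrev R3 : Type := MvPolynomial (Fin 3) ℚ

/-- Substitution `Δ(z d₁, d₂, d₃, d₁)` (first sub-RANS). -/
noncomputable def sub1 (F : PowerSeries R3) : PowerSeries R3 :=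
  PowerSeries.mk fun n =>
    (MvPolynomial.X 0 : R3) ^ n *
      MvPolynomial.aeval ![(MvPolynomial.X 1 : R3), MvPolynomial.X 2, MvPolynomial.X 0]
        (PowerSeries.coeff n F)

/-- Substitution `Δ(z, d₁, d₂ d₃, 1)` (second sub-RANS). -/
noncomputable def sub2 (F : PowerSeries R3) : PowerSeries R3 :=
  PowerSeries.mk fun n =>
    MvPolynomial.aeval ![(MvPolynomial.X 0 : R3), MvPolynomial.X 1 * MvPolynomial.X 2, 1]
      (PowerSeries.coeff n F)

/-- Substitution `Δ(z, d₁ d₂, d₃, 1)` (third sub-RANS). -/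
noncomputable def sub3 (F : PowerSeries R3) : PowerSeries R3 :=
  PowerSeries.mk fun n =>
    MvPolynomial.aeval ![(MvPolynomial.X 0 * MvPolynomial.X 1 : R3), MvPolynomial.X 2, 1]
      (PowerSeries.coeff n F)

namespace Tern

def sg : Tern → Tern
  | leaf => leaf
  | node a b c => node (sg a) (sg c) (sg b)

def tu : Tern → Tern
  | leaf => leaf
  | node a b c => node (tu b) (tu a) (tu c)

lemma sg_sg : ∀ t, sg (sg t) = t
  | leaf => rfl
  | node a b c => by simp [sg, sg_sg a, sg_sg b, sg_sg c]

lemma tu_tu : ∀ t, tu (tu t) = t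
  | leaf => rfl
  | node a b c => by simp [tu, tu_tu a, tu_tu b, tu_tu c]

lemma size_sg : ∀ t, (sg t).size = t.size
  | leaf => rfl
  | node a b c => by simp [sg, size, size_sg a, size_sg b, size_sg c]; omega

lemma size_tu : ∀ t, (tu t).size = t.size
  | leaf => rfl
  | node a b c => by simp [tu, size, size_tu a, size_tu b, size_tu c]; omega

lemma labelSum_sg : ∀ t a b c, (sg t).labelSum a b c = t.labelSum a c b
  | leaf, _, _, _ => rfl
  | node s₁ s₂ s₃, a, b, c => by
      simp only [sg, labelSum, labelSum_sg s₁, labelSum_sg s₂, labelSum_sg s₃]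
      have h : min a (min b c) = min a (min c b) := by omega
      rw [h]
      ring

lemma labelSum_tu : ∀ t a b c, (tu t).labelSum a b c = t.labelSum b a c
  | leaf, _, _, _ => rfl
  | node s₁ s₂ s₃, a, b, c => by
      simp only [tu, labelSum, labelSum_tu s₁, labelSum_tu s₂, labelSum_tu s₃]
      have h : min a (min b c) = min b (min a c) := by omega
      rw [h]
      ring

lemma labelSum_succ : ∀ (t : Tern) (a b c : ℕ), t.labelSum (a+1) (b+1) (c+1) = t.labelSum a b c + t.size
  | leaf, _, _, _ => rfl
  | node s₁ s₂ s₃, a, b, c => by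
      simp only [labelSum, size]
      have h : 1 + min (a+1) (min (b+1) (c+1)) = (1 + min a (min b c)) + 1 := by omega
      rw [h, labelSum_succ s₁, labelSum_succ s₂, labelSum_succ s₃]
      ring

/-- The composite tree in the bijection. -/
def glue (t₁ t₂ t₃ : Tern) : Tern := node (tu (sg t₁)) (sg t₃) t₂

lemma size_glue (t₁ t₂ t₃ : Tern) :
    (glue t₁ t₂ t₃).size = 1 + t₁.size + t₂.size + t₃.size := by
  simp [glue, size, size_sg, size_tu]; omega

lemma d1_glue (t₁ t₂ t₃ : Tern) :
    (glue t₁ t₂ t₃).d1 = 1 + t₁.size + t₁.d3 + t₂.d1 + t₃.d1 := by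
  show (glue t₁ t₂ t₃).labelSum 0 1 1 = _
  simp only [glue, labelSum]
  have e1 : (tu (sg t₁)).labelSum (1 + min 0 (min 1 1)) 1 1 = t₁.labelSum 0 0 0 + t₁.size := by
    norm_num [labelSum_tu, labelSum_sg]
    have := labelSum_succ t₁ 0 0 0
    simpa using this
  rw [e1]
  simp only [labelSum_sg]
  norm_num [d1, d3]
  ring

lemma d2_glue (t₁ t₂ t₃ : Tern) :
    (glue t₁ t₂ t₃).d2 = 1 + t₁.d1 + t₂.d2 + t₃.d1 := by
  show (glue t₁ t₂ t₃).labelSum 0 0 1 = _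
  simp only [glue, labelSum, labelSum_tu, labelSum_sg]
  norm_num [d1, d2]
  ring

lemma d3_glue (t₁ t₂ t₃ : Tern) :
    (glue t₁ t₂ t₃).d3 = 1 + t₁.d2 + t₂.d2 + t₃.d2 := by
  show (glue t₁ t₂ t₃).labelSum 0 0 0 = _
  simp only [glue, labelSum, labelSum_tu, labelSum_sg]
  norm_num [d2]
  ring

lemma glue_inv (s₁ s₂ s₃ : Tern) : glue (sg (tu s₁)) s₃ (sg s₂) = node s₁ s₂ s₃ := by
  simp [glue, sg_sg, tu_tu]

end Tern



namespace Tern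

lemma size_eq_zero {t : Tern} : t.size = 0 ↔ t = leaf := by
  cases t <;> simp [size]

lemma finite_le : ∀ n : ℕ, {t : Tern | t.size ≤ n}.Finite
  | 0 => by
      apply Set.Finite.subset (Set.finite_singleton leaf)
      intro t ht
      simp only [Set.mem_setOf_eq, Nat.le_zero] at ht
      simpa using size_eq_zero.mp ht
  | (n+1) => by
      have IH := finite_le n
      apply Set.Finite.subset
        (Set.Finite.insert leaf (Set.Finite.image
          (fun p : Tern × Tern × Tern => node p.1 p.2.1 p.2.2)
          (IH.prod (IH.prod IH))))
      rintro (_ | ⟨a, b, c⟩) ht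
      · exact Set.mem_insert _ _
      · refine Set.mem_insert_of_mem _ ⟨(a, b, c), ?_, rfl⟩
        simp only [Set.mem_setOf_eq, size, Set.mem_prod] at ht ⊢
        refine ⟨by omega, by omega, by omega⟩

lemma finite_eq (n : ℕ) : {t : Tern | t.size = n}.Finite :=
  (finite_le n).subset fun t ht => le_of_eq ht

/-- Finset of all trees of size `n`. -/
noncomputable def T (n : ℕ) : Finset Tern := (finite_eq n).toFinset

lemma mem_T {n : ℕ} {t : Tern} : t ∈ T n ↔ t.size = n := by
  simp [T, Set.Finite.mem_toFinset]

lemma T_zero : T 0 = {leaf} := by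
  ext t; simp [mem_T, size_eq_zero]

end Tern

/-- exponent vector -/
noncomputable def vec3 (a b c : ℕ) : Fin 3 →₀ ℕ :=
  Finsupp.single 0 a + Finsupp.single 1 b + Finsupp.single 2 c

lemma vec3_apply0 (a b c : ℕ) : vec3 a b c 0 = a := by simp [vec3, Finsupp.single_apply]
lemma vec3_apply1 (a b c : ℕ) : vec3 a b c 1 = b := by simp [vec3, Finsupp.single_apply]
lemma vec3_apply2 (a b c : ℕ) : vec3 a b c 2 = c := by simp [vec3, Finsupp.single_apply]

lemma vec3_add (a b c a' b' c' : ℕ) :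
    vec3 a b c + vec3 a' b' c' = vec3 (a+a') (b+b') (c+c') := by
  simp only [vec3, Finsupp.single_add]
  abel

lemma vec3_eq_iff (a b c : ℕ) (m : Fin 3 →₀ ℕ) :
    vec3 a b c = m ↔ m 0 = a ∧ m 1 = b ∧ m 2 = c := by
  constructor
  · rintro rfl; exact ⟨vec3_apply0 a b c, vec3_apply1 a b c, vec3_apply2 a b c⟩
  · rintro ⟨h0, h1, h2⟩
    ext i
    fin_cases i
    · simpa [vec3_apply0] using h0.symm
    · simpa [vec3_apply1] using h1.symm
    · simpa [vec3_apply2] using h2.symm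

lemma X_prod (a b c : ℕ) : (MvPolynomial.X 0 : R3) ^ a * MvPolynomial.X 1 ^ b * MvPolynomial.X 2 ^ c = monomial (vec3 a b c) 1 := by
  rw [X_pow_eq_monomial, X_pow_eq_monomial, X_pow_eq_monomial, monomial_mul, monomial_mul,
    one_mul, one_mul]
  rfl

lemma aeval_mono (f : Fin 3 → R3) (m : Fin 3 →₀ ℕ) :
    aeval f (monomial m (1 : ℚ)) = f 0 ^ m 0 * f 1 ^ m 1 * f 2 ^ m 2 := by
  rw [aeval_monomial, map_one, one_mul, Finsupp.prod_pow, Fin.prod_univ_three]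

lemma sub1_term (n a b c : ℕ) :
    (MvPolynomial.X 0 : R3) ^ n * aeval ![(MvPolynomial.X 1 : R3), MvPolynomial.X 2, MvPolynomial.X 0] (monomial (vec3 a b c) (1 : ℚ)) =
      monomial (vec3 (n + c) a b) 1 := by
  rw [aeval_mono]
  simp only [Matrix.cons_val_zero, Matrix.cons_val_one, Matrix.head_cons,
    vec3_apply0, vec3_apply1, vec3_apply2]
  rw [show ((![(MvPolynomial.X 1 : R3), MvPolynomial.X 2, MvPolynomial.X 0]) 2) = MvPolynomial.X 0 from rfl]
  rw [show (MvPolynomial.X 0 : R3) ^ n * (MvPolynomial.X 1 ^ a * MvPolynomial.X 2 ^ b * MvPolynomial.X 0 ^ c) =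
    MvPolynomial.X 0 ^ (n + c) * MvPolynomial.X 1 ^ a * MvPolynomial.X 2 ^ b by rw [pow_add]; ring]
  exact X_prod _ _ _

lemma sub2_term (a b c : ℕ) :
    aeval ![(MvPolynomial.X 0 : R3), MvPolynomial.X 1 * MvPolynomial.X 2, 1] (monomial (vec3 a b c) (1 : ℚ)) =
      monomial (vec3 a b b) 1 := by
  rw [aeval_mono]
  simp only [Matrix.cons_val_zero, Matrix.cons_val_one, Matrix.head_cons,
    vec3_apply0, vec3_apply1, vec3_apply2]
  rw [show ((![(MvPolynomial.X 0 : R3), MvPolynomial.X 1 * MvPolynomial.X 2, 1]) 2) = 1 from rfl, one_pow, mul_one]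
  rw [show (MvPolynomial.X 0 : R3) ^ a * (MvPolynomial.X 1 * MvPolynomial.X 2) ^ b = MvPolynomial.X 0 ^ a * MvPolynomial.X 1 ^ b * MvPolynomial.X 2 ^ b by rw [mul_pow]; ring]
  exact X_prod _ _ _

lemma sub3_term (a b c : ℕ) :
    aeval ![(MvPolynomial.X 0 * MvPolynomial.X 1 : R3), MvPolynomial.X 2, 1] (monomial (vec3 a b c) (1 : ℚ)) =
      monomial (vec3 a a b) 1 := by
  rw [aeval_mono]
  simp only [Matrix.cons_val_zero, Matrix.cons_val_one, Matrix.head_cons,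
    vec3_apply0, vec3_apply1, vec3_apply2]
  rw [show ((![(MvPolynomial.X 0 * MvPolynomial.X 1 : R3), MvPolynomial.X 2, 1]) 2) = 1 from rfl, one_pow, mul_one]
  rw [show (MvPolynomial.X 0 * MvPolynomial.X 1 : R3) ^ a * MvPolynomial.X 2 ^ b = MvPolynomial.X 0 ^ a * MvPolynomial.X 1 ^ a * MvPolynomial.X 2 ^ b by rw [mul_pow]]
  exact X_prod _ _ _

lemma g_eq : (MvPolynomial.X 0 * MvPolynomial.X 1 * MvPolynomial.X 2 : R3) = monomial (vec3 1 1 1) 1 := by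
  have := X_prod 1 1 1
  simpa using this

lemma vec3_congr {a b c a' b' c' : ℕ} (ha : a = a') (hb : b = b') (hc : c = c') :
    vec3 a b c = vec3 a' b' c' := by rw [ha, hb, hc]

abbrev IdxT : Type := Σ _ : (Σ _ : (Σ _ : (Σ _ : ℕ × ℕ, ℕ × ℕ), Tern), Tern), Tern

def toIdx (n : ℕ) : Tern → IdxT
  | .leaf => ⟨⟨⟨⟨(0, n), (0, 0)⟩, .leaf⟩, .leaf⟩, .leaf⟩
  | .node s₁ s₂ s₃ =>
      ⟨⟨⟨⟨(s₁.size, s₂.size + s₃.size), (s₃.size, s₂.size)⟩, Tern.sg s₂⟩, s₃⟩,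
        Tern.sg (Tern.tu s₁)⟩

/-- The topological generating function
`Δ(z,d₁,d₂,d₃) = ∑_R d₁^{Δ₁(R)} d₂^{Δ₂(R)} d₃^{Δ₃(R)} z^{|R|}` (encoded as a
power series in `z` with polynomial coefficients in `d₁,d₂,d₃`) satisfies
`Δ(z,d₁,d₂,d₃) = 1 + z d₁ d₂ d₃ · Δ(z d₁,d₂,d₃,d₁) · Δ(z,d₁,d₂d₃,1) · Δ(z,d₁d₂,d₃,1)`. -/
theorem topological_gf_equation (F : PowerSeries R3)
    (hF : ∀ (n : ℕ) (m : Fin 3 →₀ ℕ),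
      MvPolynomial.coeff m (PowerSeries.coeff n F) =
        Nat.card {t : Tern // t.size = n ∧ t.d1 = m 0 ∧ t.d2 = m 1 ∧ t.d3 = m 2}) :
    F = 1 + PowerSeries.X *
      PowerSeries.C (R := R3) (MvPolynomial.X 0 * MvPolynomial.X 1 * MvPolynomial.X 2) *
      sub1 F * sub2 F * sub3 F := by
  classical
  -- Step A: coefficients of F as tree sums
  have hc : ∀ n, PowerSeries.coeff n F
      = ∑ t ∈ Tern.T n, monomial (vec3 t.d1 t.d2 t.d3) (1 : ℚ) := by
    intro n
    apply MvPolynomial.ext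
    intro m
    rw [hF n m, MvPolynomial.coeff_sum]
    simp only [MvPolynomial.coeff_monomial]
    rw [Finset.sum_boole]
    congr 1
    have hset : {t : Tern | t.size = n ∧ t.d1 = m 0 ∧ t.d2 = m 1 ∧ t.d3 = m 2}
        = ↑((Tern.T n).filter fun t => vec3 t.d1 t.d2 t.d3 = m) := by
      ext t
      simp only [Set.mem_setOf_eq, Finset.coe_filter, Tern.mem_T, vec3_eq_iff]
      tauto
    rw [show {t : Tern // t.size = n ∧ t.d1 = m 0 ∧ t.d2 = m 1 ∧ t.d3 = m 2}
        = ↥{t : Tern | t.size = n ∧ t.d1 = m 0 ∧ t.d2 = m 1 ∧ t.d3 = m 2} from rfl,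
      Nat.card_coe_set_eq, hset, Set.ncard_coe_finset]
  -- Step B: coefficients of the substituted series
  have hc1 : ∀ n, PowerSeries.coeff n (sub1 F)
      = ∑ t ∈ Tern.T n, monomial (vec3 (n + t.d3) t.d1 t.d2) (1 : ℚ) := by
    intro n
    rw [sub1, PowerSeries.coeff_mk, hc n, map_sum, Finset.mul_sum]
    exact Finset.sum_congr rfl fun t _ => sub1_term n t.d1 t.d2 t.d3
  have hc2 : ∀ n, PowerSeries.coeff n (sub2 F)
      = ∑ t ∈ Tern.T n, monomial (vec3 t.d1 t.d2 t.d2) (1 : ℚ) := by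
    intro n
    rw [sub2, PowerSeries.coeff_mk, hc n, map_sum]
    exact Finset.sum_congr rfl fun t _ => sub2_term t.d1 t.d2 t.d3
  have hc3 : ∀ n, PowerSeries.coeff n (sub3 F)
      = ∑ t ∈ Tern.T n, monomial (vec3 t.d1 t.d1 t.d2) (1 : ℚ) := by
    intro n
    rw [sub3, PowerSeries.coeff_mk, hc n, map_sum]
    exact Finset.sum_congr rfl fun t _ => sub3_term t.d1 t.d2 t.d3
  -- Step C: coefficient-wise equality
  ext n
  rcases n with _ | n
  · -- constant coefficient
    rw [hc 0, Tern.T_zero]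
    rw [show PowerSeries.X * PowerSeries.C (R := R3) (MvPolynomial.X 0 * MvPolynomial.X 1 * MvPolynomial.X 2) *
        sub1 F * sub2 F * sub3 F
      = PowerSeries.X * (PowerSeries.C (R := R3) (MvPolynomial.X 0 * MvPolynomial.X 1 * MvPolynomial.X 2) *
        sub1 F * sub2 F * sub3 F) by ring]
    simp [Tern.d1, Tern.d2, Tern.d3, Tern.labelSum, vec3]
  · rw [show PowerSeries.X * PowerSeries.C (R := R3) (MvPolynomial.X 0 * MvPolynomial.X 1 * MvPolynomial.X 2) *
        sub1 F * sub2 F * sub3 F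
      = PowerSeries.X * (PowerSeries.C (R := R3) (MvPolynomial.X 0 * MvPolynomial.X 1 * MvPolynomial.X 2) *
        (sub1 F * (sub2 F * sub3 F))) by ring]
    rw [map_add, PowerSeries.coeff_succ_X_mul, PowerSeries.coeff_C_mul, PowerSeries.coeff_one,
      if_neg (Nat.succ_ne_zero n), zero_add, PowerSeries.coeff_mul]
    rw [hc (n+1), g_eq, Finset.mul_sum]
    simp only [PowerSeries.coeff_mul, hc1, hc2, hc3, Finset.mul_sum, Finset.sum_mul,
      monomial_mul, vec3_add, one_mul, mul_one]
    congr 1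
    rw [Finset.sum_sigma', Finset.sum_sigma', Finset.sum_sigma', Finset.sum_sigma']
    refine Finset.sum_nbij' (toIdx n) (fun x => Tern.glue x.2 x.1.2 x.1.1.2) ?_ ?_ ?_ ?_ ?_
    · rintro (_ | ⟨s₁, s₂, s₃⟩) ht
      · simp [Tern.mem_T, Tern.size] at ht
      · simp only [Tern.mem_T, Tern.size] at ht
        simp only [toIdx, Finset.mem_sigma, Finset.HasAntidiagonal.mem_antidiagonal, Tern.mem_T,
          Tern.size_sg, Tern.size_tu]
        repeat' apply And.intro
        all_goals first | trivial | omega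
    · rintro ⟨⟨⟨⟨p, q⟩, t3⟩, t2⟩, t1⟩ hx
      simp only [Finset.mem_sigma, Finset.HasAntidiagonal.mem_antidiagonal, Tern.mem_T] at hx
      simp only [Tern.mem_T, Tern.size_glue]
      omega
    · rintro (_ | ⟨s₁, s₂, s₃⟩) ht
      · simp [Tern.mem_T, Tern.size] at ht
      · simp only [toIdx]
        exact Tern.glue_inv s₁ s₂ s₃
    · rintro ⟨⟨⟨⟨⟨p1, p2⟩, ⟨q1, q2⟩⟩, t3⟩, t2⟩, t1⟩ hx
      simp only [Finset.mem_sigma, Finset.HasAntidiagonal.mem_antidiagonal, Tern.mem_T] at hx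
      obtain ⟨⟨⟨⟨hp, hq⟩, ht3⟩, ht2⟩, ht1⟩ := hx
      simp only [Tern.glue, toIdx, Tern.sg_sg, Tern.tu_tu, Tern.size_sg, Tern.size_tu]
      subst ht1; subst ht2; subst ht3; subst hq
      rw [Nat.add_comm t3.size t2.size]
    · rintro (_ | ⟨s₁, s₂, s₃⟩) ht
      · simp [Tern.mem_T, Tern.size] at ht
      · have e1 : (Tern.node s₁ s₂ s₃).d1
            = 1 + s₁.size + (Tern.sg (Tern.tu s₁)).d3 + s₃.d1 + (Tern.sg s₂).d1 := by
          rw [← Tern.glue_inv s₁ s₂ s₃, Tern.d1_glue, Tern.size_sg, Tern.size_tu]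
        have e2 : (Tern.node s₁ s₂ s₃).d2
            = 1 + (Tern.sg (Tern.tu s₁)).d1 + s₃.d2 + (Tern.sg s₂).d1 := by
          rw [← Tern.glue_inv s₁ s₂ s₃, Tern.d2_glue]
        have e3 : (Tern.node s₁ s₂ s₃).d3
            = 1 + (Tern.sg (Tern.tu s₁)).d2 + s₃.d2 + (Tern.sg s₂).d2 := by
          rw [← Tern.glue_inv s₁ s₂ s₃, Tern.d3_glue]
        simp only [toIdx]
        exact congrArg (fun v => (MvPolynomial.monomial v) (1:ℚ))
          (vec3_congr (by rw [e1]; omega) (by rw [e2]; omega) (by rw [e3]; omega))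
end
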